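/- For a locally compact Hausdorff space B, the relative Stone–Čech compactification β_B is left adjoint to the inclusion of the full subcategory of Hausdorff proper B-spaces into the category of all B-spaces; i.e., this subcategory is reflective. -/

import Mathlib

open scoped ZeroAtInfty BoundedContinuousFunction
open WeakDual Filter

/-- The pullback `r*(h) = h ∘ r` of a `C₀` function along a continuous map, as a bounded
continuous function. -/
noncomputable def pullbackBCF {X B : Type*} [TopologicalSpace X] [TopologicalSpace B]
    (r : C(X, B)) (h : C₀(B, ℂ)) : X →ᵇ ℂ :=
  h.toBCF.compContinuous r

/-- The commutative C*-algebra `H_X = C_b(X) · r*(C₀(B))`, realised as the closure of the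
non-unital star subalgebra of `C_b(X)` generated by the products `f · r*(h)`. -/
noncomputable def relSCAlg {X B : Type*} [TopologicalSpace X] [TopologicalSpace B]
    (r : C(X, B)) : NonUnitalStarSubalgebra ℂ (X →ᵇ ℂ) :=
  (NonUnitalStarAlgebra.adjoin ℂ
    {w : X →ᵇ ℂ | ∃ f : X →ᵇ ℂ, ∃ h : C₀(B, ℂ), w = f * pullbackBCF r h}).topologicalClosure

/-- The relative Stone–Čech compactification `β_B X` of a `B`-space `(X, r)`: the character
space (spectrum) of `H_X = C_b(X) · r*(C₀(B))`. -/
noncomputable def RelSC {X B : Type*} [TopologicalSpace X] [TopologicalSpace B]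
    (r : C(X, B)) :=
  characterSpace ℂ (relSCAlg r)

/-- Evaluation at a point `x : X`, as an element of the weak dual of `H_X`. -/
noncomputable def relSCEvalChar {X B : Type*} [TopologicalSpace X] [TopologicalSpace B]
    (r : C(X, B)) (x : X) : WeakDual ℂ (relSCAlg r) :=
  (BoundedContinuousFunction.evalCLM ℂ x).comp
    (⟨{ toFun := fun f => (f : X →ᵇ ℂ),
        map_add' := fun _ _ => rfl,
        map_smul' := fun _ _ => rfl }, continuous_subtype_val⟩ :
      relSCAlg r →L[ℂ] (X →ᵇ ℂ))

/-- The canonical map `i : X → β_B X`, sending a point to the evaluation character. -/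
noncomputable def relSCMap {X B : Type*} [TopologicalSpace X] [TopologicalSpace B]
    [LocallyCompactSpace B] [T2Space B] (r : C(X, B)) (x : X) : RelSC r := by
  refine ⟨relSCEvalChar r x, ?_, fun f g => rfl⟩
  obtain ⟨h, h_comp, -, hx⟩ := exists_continuous_nonneg_pos (r x)
  have hC0 : Tendsto (fun b => (h b : ℂ)) (Filter.cocompact B) (nhds 0) := by
    exact ((Complex.continuous_ofReal.tendsto 0).comp
      (HasCompactSupport.is_zero_at_infty h_comp))
  set h' : C₀(B, ℂ) := ⟨⟨fun b => (h b : ℂ), Complex.continuous_ofReal.comp h.continuous⟩, hC0⟩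
  have hmem : (1 : X →ᵇ ℂ) * pullbackBCF r h' ∈ relSCAlg r :=
    (NonUnitalStarAlgebra.adjoin ℂ _).le_topologicalClosure
      (NonUnitalStarAlgebra.subset_adjoin ℂ _ ⟨1, h', rfl⟩)
  intro h0
  have h2 : ((1 : X →ᵇ ℂ) * pullbackBCF r h') x = 0 := by
    have := congrArg (fun φ : WeakDual ℂ (relSCAlg r) => φ ⟨_, hmem⟩) h0
    exact this
  apply hx
  have h3 : (h (r x) : ℂ) = 0 := by
    simpa [pullbackBCF, h', BoundedContinuousFunction.coe_compContinuous] using h2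
  exact_mod_cast h3

section GAFTHelpers
open CategoryTheory CategoryTheory.Limits Topology


section A
variable {B : Type} [TopologicalSpace B] [T2Space B]
variable {J : Type} [Category.{0} J] (F : J ⥤ Over (TopCat.of B))

/-- The explicit limit of a diagram of `B`-spaces. -/
def OverLim : Type :=
  {p : B × (∀ j : J, (F.obj j).left) //
    (∀ j, (F.obj j).hom (p.2 j) = p.1) ∧
      ∀ {j j'} (f : j ⟶ j'), (F.map f).left (p.2 j) = p.2 j'}

instance : TopologicalSpace (OverLim F) := by unfold OverLim; infer_instance

def overLimProj : C(OverLim F, B) := ⟨fun p => p.1.1, by continuity⟩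

def overLimCoord (j : J) : C(OverLim F, (F.obj j).left) :=
  ⟨fun p => p.1.2 j, (continuous_apply j).comp (continuous_snd.comp continuous_subtype_val)⟩

end A

section B
variable {B : Type} [TopologicalSpace B] [T2Space B]
variable {J : Type} [Category.{0} J] (F : J ⥤ Over (TopCat.of B))

theorem overLim_t2 (hF : ∀ j, T2Space (F.obj j).left) : T2Space (OverLim F) := by
  haveI := hF
  unfold OverLim; infer_instance

theorem overLimProj_proper (hF : ∀ j, T2Space (F.obj j).left)
    (hP : ∀ j, IsProperMap ((F.obj j).hom : (F.obj j).left → TopCat.of B)) :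
    IsProperMap (overLimProj F : OverLim F → B) := by
  haveI := hF
  rw [isProperMap_iff_ultrafilter]
  refine ⟨(overLimProj F).continuous, fun 𝒰 b hb => ?_⟩
  have key : ∀ j : J, ∃ x : (F.obj j).left, (F.obj j).hom x = b ∧
      (𝒰.map (overLimCoord F j) : Filter _) ≤ nhds x := by
    intro j
    refine (hP j).ultrafilter_le_nhds_of_tendsto (𝒰 := 𝒰.map (overLimCoord F j)) ?_
    have : Tendsto (fun p : OverLim F => (F.obj j).hom (overLimCoord F j p)) 𝒰 (nhds b) := by
      have heq : (fun p : OverLim F => (F.obj j).hom (overLimCoord F j p))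
          = fun p => overLimProj F p := by
        funext p; exact p.2.1 j
      rw [heq]; exact hb
    rw [Ultrafilter.coe_map, Filter.tendsto_map'_iff]; exact this
  choose x hx hx' using key
  have hcompat : ∀ {j j'} (f : j ⟶ j'), (F.map f).left (x j) = x j' := by
    intro j j' f
    have h1 : Tendsto ((F.map f).left) (𝒰.map (overLimCoord F j)) (nhds ((F.map f).left (x j))) :=
      (((F.map f).left.hom.continuous).tendsto _).comp (hx' j)
    have h2 : (fun p : OverLim F => (F.map f).left (overLimCoord F j p))
        = fun p => overLimCoord F j' p := by
      funext p; exact p.2.2 f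
    have h3 : Tendsto (fun p : OverLim F => (F.map f).left (overLimCoord F j p)) 𝒰
        (nhds ((F.map f).left (x j))) := by
      rw [Ultrafilter.coe_map, Filter.tendsto_map'_iff] at h1; exact h1
    rw [h2] at h3
    exact tendsto_nhds_unique h3 (hx' j')
  refine ⟨⟨(b, x), hx, hcompat⟩, rfl, ?_⟩
  have : Tendsto (fun p : OverLim F => (p.1 : B × ∀ j : J, (F.obj j).left)) 𝒰 (nhds (b, x)) := by
    rw [nhds_prod_eq]
    refine Tendsto.prodMk hb ?_
    rw [tendsto_pi_nhds]
    intro j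
    exact hx' j
  intro s hs
  replace hs := (mem_nhds_subtype _ _ _).mp hs
  obtain ⟨t, ht, hts⟩ := hs
  exact Filter.mem_of_superset (this ht) hts

end B

section C
variable {B : Type} [TopologicalSpace B]
variable {J : Type} [Category.{0} J] (F : J ⥤ Over (TopCat.of B))

/-- The explicit limit cone. -/
def overLimCone : Cone F where
  pt := Over.mk (show TopCat.of (OverLim F) ⟶ TopCat.of B from TopCat.ofHom (overLimProj F))
  π :=
    { app := fun j => Over.homMk (TopCat.ofHom (overLimCoord F j)) (by ext p; exact p.2.1 j)
      naturality := fun j j' f => by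
        ext p
        exact (p.2.2 f).symm }

/-- The explicit cone is a limit cone. -/
def overLimConeIsLimit : IsLimit (overLimCone F) where
  lift s := Over.homMk
    (TopCat.ofHom ⟨fun z => ⟨(s.pt.hom z, fun j => (s.π.app j).left z),
        fun j => ConcreteCategory.congr_hom (Over.w (s.π.app j)) z,
        fun {j j'} f => congrFun (congrArg (fun (g : s.pt.left ⟶ (F.obj j').left) =>
          (g : s.pt.left → (F.obj j').left)) (congrArg CommaMorphism.left (s.w f))) z⟩,
      by
        apply Continuous.subtype_mk
        exact (s.pt.hom.hom.continuous).prodMk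
          (continuous_pi fun j => (s.π.app j).left.hom.continuous)⟩)
    (by ext z; rfl)
  fac s j := by ext z; rfl
  uniq s m hm := by
    ext z
    apply Subtype.ext
    refine Prod.ext ?_ ?_
    · exact ConcreteCategory.congr_hom (Over.w m) z
    · funext j
      exact congrFun (congrArg (fun (g : s.pt.left ⟶ (F.obj j).left) =>
        (g : s.pt.left → (F.obj j).left)) (congrArg CommaMorphism.left (hm j))) z

end C

section D
variable {B : Type} [TopologicalSpace B] [T2Space B]

theorem closedUnderLimits_hausdorffProper (J : Type) [Category.{0} J] :
    ObjectProperty.IsClosedUnderLimitsOfShape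
      (fun Z : Over (TopCat.of B) =>
        T2Space Z.left ∧ IsProperMap (Z.hom : Z.left → TopCat.of B)) J := by
  refine ⟨fun X ⟨h⟩ => ?_⟩
  suffices ∀ (F : J ⥤ Over (TopCat.of B)) (c : Cone F) (hc : IsLimit c)
      (hF : ∀ j, T2Space (F.obj j).left ∧
        IsProperMap ((F.obj j).hom : (F.obj j).left → TopCat.of B)),
      T2Space c.pt.left ∧ IsProperMap (c.pt.hom : c.pt.left → TopCat.of B) from
    this _ _ h.isLimit h.prop_diag_obj
  intro F c hc hF
  have hT2 : ∀ j, T2Space (F.obj j).left := fun j => (hF j).1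
  have hP : ∀ j, IsProperMap ((F.obj j).hom : (F.obj j).left → TopCat.of B) :=
    fun j => (hF j).2
  -- compare `c` with the explicit limit cone
  let i : c.pt ≅ (overLimCone F).pt := hc.conePointUniqueUpToIso (overLimConeIsLimit F)
  let e : c.pt.left ≃ₜ TopCat.of (OverLim F) :=
    TopCat.homeoOfIso ((Over.forget (TopCat.of B)).mapIso i)
  haveI : T2Space (TopCat.of (OverLim F)) := overLim_t2 F hT2
  have hhom : (c.pt.hom : c.pt.left → TopCat.of B) = (overLimProj F) ∘ e := by
    funext z
    exact (ConcreteCategory.congr_hom (Over.w i.hom) z).symm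
  constructor
  · exact e.isEmbedding.t2Space
  · rw [hhom]
    exact (overLimProj_proper F hT2 hP).comp e.isProperMap

end D

section E
variable (B : Type) [TopologicalSpace B]

/-- Index data for the solution set condition. -/
structure SolIdx (A : Over (TopCat.of B)) : Type where
  Y : Set (Set (Set A.left))
  t : TopologicalSpace Y
  rY : @ContinuousMap Y B t _
  fY : @ContinuousMap A.left Y _ t
  t2 : @T2Space Y t
  proper : IsProperMap rY
  comm : ∀ a, rY (fY a) = A.hom a

variable {B} {A : Over (TopCat.of B)}

/-- The `B`-space associated to an index. -/
def SolIdx.objOver (i : SolIdx B A) : Over (TopCat.of B) :=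
  letI := i.t
  Over.mk (show TopCat.of i.Y ⟶ TopCat.of B from TopCat.ofHom i.rY)

theorem SolIdx.prop (i : SolIdx B A) :
    T2Space i.objOver.left ∧ IsProperMap (i.objOver.hom : i.objOver.left → TopCat.of B) :=
  ⟨i.t2, i.proper⟩

/-- The canonical map to the associated `B`-space. -/
def SolIdx.homOver (i : SolIdx B A) : A ⟶ i.objOver :=
  Over.homMk (show A.left ⟶ i.objOver.left from @TopCat.ofHom _ _ _ i.t i.fY) (by ext a; exact i.comm a)

theorem solutionSet_hausdorffProper [T2Space B] :
    SolutionSetCondition.{0} (ObjectProperty.ι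
      (fun Z : Over (TopCat.of B) =>
        T2Space Z.left ∧ IsProperMap (Z.hom : Z.left → TopCat.of B))) := by
  intro A
  refine ⟨SolIdx B A, fun i => ⟨i.objOver, i.prop⟩, fun i => i.homOver, ?_⟩
  rintro ⟨Xo, hXT2, hXprop⟩ h
  haveI : T2Space Xo.left := hXT2
  -- the closure of the image of `h`
  let f : C(A.left, Xo.left) := h.left.hom
  let S : Set Xo.left := closure (Set.range f)
  have hScl : IsClosed S := isClosed_closure
  -- an injection of `S` into `Set (Set A.left)`
  let m : S → Set (Set A.left) := fun x =>
    {s | ∃ U : Set Xo.left, IsOpen U ∧ (x : Xo.left) ∈ U ∧ f ⁻¹' U ⊆ s}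
  have minj : Function.Injective m := by
    intro x y hxy
    by_contra hne
    have hne' : (x : Xo.left) ≠ y := fun hc => hne (Subtype.ext hc)
    obtain ⟨U, V, hU, hV, hxU, hyV, hUV⟩ := t2_separation hne'
    have h1 : f ⁻¹' U ∈ m x := ⟨U, hU, hxU, subset_rfl⟩
    rw [hxy] at h1
    obtain ⟨W, hW, hyW, hWU⟩ := h1
    have hne2 : ((W ∩ V) ∩ Set.range f).Nonempty := by
      have hy : (y : Xo.left) ∈ closure (Set.range f) := y.2
      rw [mem_closure_iff] at hy
      exact hy _ (hW.inter hV) ⟨hyW, hyV⟩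
    obtain ⟨z, ⟨hzW, hzV⟩, a, ha⟩ := hne2
    have hzU : z ∈ U := by
      have : a ∈ f ⁻¹' W := by rw [Set.mem_preimage, ha]; exact hzW
      have := hWU this
      rwa [Set.mem_preimage, ha] at this
    exact (Set.disjoint_left.mp hUV hzU) hzV
  let e : S ≃ Set.range m := Equiv.ofInjective m minj
  letI tY : TopologicalSpace (Set.range m) :=
    TopologicalSpace.induced (e.symm : Set.range m → S) inferInstance
  let E : S ≃ₜ Set.range m := (Equiv.toHomeomorphOfIsInducing e.symm ⟨rfl⟩).symm
  haveI ht2Y : T2Space (Set.range m) := E.symm.isEmbedding.t2Space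
  have hvalproper : IsProperMap (Subtype.val : S → Xo.left) := hScl.isProperMap_subtypeVal
  -- the structure maps
  let rY : @ContinuousMap (Set.range m) B tY _ :=
    ⟨fun y => Xo.hom ((E.symm y : S) : Xo.left),
      Xo.hom.hom.continuous.comp (continuous_subtype_val.comp E.symm.continuous)⟩
  have hrYproper : IsProperMap (rY : Set.range m → B) := by
    have : (rY : Set.range m → B) =
        (Xo.hom : Xo.left → B) ∘ (Subtype.val : S → Xo.left) ∘ (E.symm : Set.range m → S) := rfl
    rw [this]
    exact hXprop.comp (hvalproper.comp E.symm.isProperMap)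
  let fS : C(A.left, S) := ⟨fun a => ⟨f a, subset_closure (Set.mem_range_self a)⟩,
    f.continuous.subtype_mk _⟩
  let fY : @ContinuousMap A.left (Set.range m) _ tY :=
    ⟨fun a => E (fS a), E.continuous.comp fS.continuous⟩
  have hcomm : ∀ a, rY (fY a) = A.hom a := by
    intro a
    have h1 : rY (fY a) = Xo.hom (f a) := by
      show Xo.hom ((E.symm (E (fS a)) : S) : Xo.left) = _
      rw [Homeomorph.symm_apply_apply]
      rfl
    rw [h1]
    exact ConcreteCategory.congr_hom (Over.w h) a
  let i : SolIdx B A := ⟨Set.range m, tY, rY, fY, ht2Y, hrYproper, hcomm⟩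
  -- the factorizing morphism
  let g : i.objOver ⟶ Xo :=
    Over.homMk (show i.objOver.left ⟶ Xo.left from
        TopCat.ofHom ⟨fun y => ((E.symm y : S) : Xo.left),
          continuous_subtype_val.comp E.symm.continuous⟩)
      (by ext y; rfl)
  refine ⟨i, ObjectProperty.homMk g, ?_⟩
  ext a
  show ((E.symm (E (fS a)) : S) : Xo.left) = f a
  rw [Homeomorph.symm_apply_apply]
  rfl

end E


end GAFTHelpers

open CategoryTheory in
/-- For a locally compact Hausdorff space `B`, the full subcategory of Hausdorff proper
`B`-spaces is reflective in the category of all `B`-spaces: the inclusion functor admits a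
left adjoint (given by the relative Stone–Čech compactification `β_B`). -/
theorem hausdorffProper_reflective_in_spaces_over
    (B : Type) [TopologicalSpace B] [LocallyCompactSpace B] [T2Space B] :
    (ObjectProperty.ι
        (fun Z : Over (TopCat.of B) =>
          T2Space Z.left ∧ IsProperMap (Z.hom : Z.left → TopCat.of B))).IsRightAdjoint := by
  set P : Over (TopCat.of B) → Prop :=
    fun Z => T2Space Z.left ∧ IsProperMap (Z.hom : Z.left → TopCat.of B) with hP
  haveI hOL : Limits.HasLimits (Over (TopCat.of B)) := inferInstance
  haveI : Limits.HasLimits (ObjectProperty.FullSubcategory P) :=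
    ⟨fun J _ => by
      haveI := (closedUnderLimits_hausdorffProper J : ObjectProperty.IsClosedUnderLimitsOfShape P J)
      exact Limits.hasLimitsOfShape_of_closedUnderLimits J P⟩
  haveI : ∀ (J : Type) (_ : Category.{0} J),
      CreatesLimitsOfShape J (ObjectProperty.ι P) := fun J _ => by
    haveI := (closedUnderLimits_hausdorffProper J : ObjectProperty.IsClosedUnderLimitsOfShape P J)
    exact Limits.createsLimitsOfShapeFullSubcategoryInclusion J P
  haveI : Limits.PreservesLimits (ObjectProperty.ι P) :=
    ⟨fun {J} _ => inferInstance⟩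
  exact isRightAdjoint_of_preservesLimits_of_solutionSetCondition _ solutionSet_hausdorffProper
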